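/- Let w ∈ {0,1}^k be a random vector with i.i.d. Bernoulli(θ) entries, θ ∈ (0,1], and let d = k·r. Then for U ∈ ℝ^{a×d}, V ∈ ℝ^{b×d}, Y ∈ ℝ^{a×n}, X ∈ ℝ^{b×n}: E_w ‖Y − (1/θ) U (diag(w) ⊗ I_r) Vᵀ X‖_F² = ‖Y − U Vᵀ X‖_F² + ((1−θ)/θ) Σ_{i=1}^k ‖U_i V_iᵀ X‖_F², where U_i ∈ ℝ^{a×r} and V_i ∈ ℝ^{b×r} are the i-th blocks of r consecutive columns of U and V. -/
import Mathlib


open Finset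

lemma entry_lemma {a b n k r : ℕ} (d : Fin k → ℝ)
    (U : Matrix (Fin a) (Fin k × Fin r) ℝ) (V : Matrix (Fin b) (Fin k × Fin r) ℝ)
    (X : Matrix (Fin b) (Fin n) ℝ) (p : Fin a) (q : Fin n) :
    (U * Matrix.diagonal (fun is : Fin k × Fin r => d is.1) * V.transpose * X) p q
      = ∑ i : Fin k, d i * ∑ s : Fin r, U p (i, s) * ∑ l, V l (i, s) * X l q := by
  simp only [Matrix.mul_apply, Matrix.diagonal_apply, Matrix.transpose_apply,
    mul_ite, mul_zero, Finset.sum_ite_eq, Finset.sum_ite_eq', Finset.mem_univ, if_true,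
    Finset.sum_mul]
  rw [Finset.sum_comm, Fintype.sum_prod_type]
  refine Finset.sum_congr rfl fun i _ => ?_
  rw [Finset.mul_sum]
  refine Finset.sum_congr rfl fun s _ => ?_
  rw [Finset.mul_sum, Finset.mul_sum]
  refine Finset.sum_congr rfl fun l _ => ?_
  ring

lemma key (θ : ℝ) (hθ : θ ≠ 0) : ∀ (k : ℕ) (y : ℝ) (m : Fin k → ℝ),
    ∑ w : Fin k → Bool, (∏ i, if w i then θ else 1 - θ) *
      (y - (1 / θ) * ∑ i, (if w i then (1:ℝ) else 0) * m i) ^ 2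
    = (y - ∑ i, m i) ^ 2 + ((1 - θ) / θ) * ∑ i, (m i) ^ 2 := by
  intro k
  induction k with
  | zero => intro y m; simp
  | succ k ih =>
    intro y m
    rw [← (Fin.consEquiv (fun _ : Fin (k+1) => Bool)).sum_comp]
    rw [Fintype.sum_prod_type]
    simp only [Fin.consEquiv_apply, Fin.prod_univ_succ, Fin.sum_univ_succ,
      Fin.cons_zero, Fin.cons_succ, Fintype.sum_bool]
    have h1 := ih (y - (1/θ) * m 0) (fun i => m i.succ)
    have h2 := ih y (fun i => m i.succ)
    simp only [if_true, if_false, one_mul, zero_mul, zero_add, Bool.false_eq_true]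
    have e1 : ∀ w : Fin k → Bool,
        y - 1/θ * (m 0 + ∑ i : Fin k, (if w i then (1:ℝ) else 0) * m i.succ)
        = (y - 1/θ * m 0) - 1/θ * ∑ i : Fin k, (if w i then (1:ℝ) else 0) * m i.succ := by
      intro w; ring
    calc (∑ w : Fin k → Bool, θ * (∏ i, if w i then θ else 1-θ) *
            (y - 1/θ * (m 0 + ∑ i : Fin k, (if w i then (1:ℝ) else 0) * m i.succ))^2)
          + ∑ w : Fin k → Bool, (1-θ) * (∏ i, if w i then θ else 1-θ) *
            (y - 1/θ * ∑ i : Fin k, (if w i then (1:ℝ) else 0) * m i.succ)^2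
        = θ * ∑ w : Fin k → Bool, (∏ i, if w i then θ else 1-θ) *
            ((y - 1/θ * m 0) - 1/θ * ∑ i : Fin k, (if w i then (1:ℝ) else 0) * m i.succ)^2
          + (1-θ) * ∑ w : Fin k → Bool, (∏ i, if w i then θ else 1-θ) *
            (y - 1/θ * ∑ i : Fin k, (if w i then (1:ℝ) else 0) * m i.succ)^2 := by
          rw [Finset.mul_sum, Finset.mul_sum]
          congr 1
          · refine Finset.sum_congr rfl fun w _ => ?_; rw [e1 w]; ring
          · refine Finset.sum_congr rfl fun w _ => ?_; ring
      _ = θ * (((y - 1/θ * m 0) - ∑ i : Fin k, m i.succ)^2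
              + ((1-θ)/θ) * ∑ i : Fin k, (m i.succ)^2)
          + (1-θ) * ((y - ∑ i : Fin k, m i.succ)^2
              + ((1-θ)/θ) * ∑ i : Fin k, (m i.succ)^2) := by
          rw [ih (y - 1/θ * m 0) (fun i => m i.succ), ih y (fun i => m i.succ)]
      _ = (y - (m 0 + ∑ i : Fin k, m i.succ))^2
          + (1-θ)/θ * ((m 0)^2 + ∑ i : Fin k, (m i.succ)^2) := by
          field_simp
          ring

/-- DropBlock deterministic equivalent: for i.i.d. Bernoulli block variables `w`,
the expected stochastic objective equals the deterministic objective plus the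
DropBlock regularizer `((1-θ)/θ) Σ_i ‖U_i V_iᵀ X‖_F²`.  Columns are indexed by
`Fin k × Fin r`, so `diag(w) ⊗ I_r` is the diagonal matrix with entry `w i` at `(i,s)`. -/
theorem stmt2 (a b n k r : ℕ) (θ : ℝ) (hθ0 : 0 < θ) (hθ1 : θ ≤ 1)
    (U : Matrix (Fin a) (Fin k × Fin r) ℝ) (V : Matrix (Fin b) (Fin k × Fin r) ℝ)
    (Y : Matrix (Fin a) (Fin n) ℝ) (X : Matrix (Fin b) (Fin n) ℝ) :
    ∑ w : Fin k → Bool, (∏ i, if w i then θ else 1 - θ) *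
      (∑ p, ∑ q, ((Y - (1 / θ) •
        (U * Matrix.diagonal (fun is : Fin k × Fin r => if w is.1 then (1 : ℝ) else 0)
          * V.transpose * X)) p q) ^ 2)
    = (∑ p, ∑ q, ((Y - U * V.transpose * X) p q) ^ 2)
      + ((1 - θ) / θ) * ∑ i : Fin k,
          ∑ p, ∑ q, (∑ s : Fin r, U p (i, s) * (∑ l, V l (i, s) * X l q)) ^ 2 := by
  have hθ : θ ≠ 0 := ne_of_gt hθ0
  set m : Fin k → Fin a → Fin n → ℝ :=
    fun i p q => ∑ s : Fin r, U p (i, s) * ∑ l, V l (i, s) * X l q with hm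
  have hdet : ∀ p q, (Y - U * V.transpose * X) p q = Y p q - ∑ i, m i p q := by
    intro p q
    have : U * V.transpose * X
        = U * Matrix.diagonal (fun is : Fin k × Fin r => (1:ℝ)) * V.transpose * X := by
      rw [show Matrix.diagonal (fun _ : Fin k × Fin r => (1:ℝ)) = 1 from Matrix.diagonal_one]; rw [Matrix.mul_one]
    rw [Matrix.sub_apply, this, entry_lemma (fun _ : Fin k => (1:ℝ))]
    simp [hm]
  have hsto : ∀ (w : Fin k → Bool) p q,
      (Y - (1 / θ) • (U * Matrix.diagonal
          (fun is : Fin k × Fin r => if w is.1 then (1 : ℝ) else 0)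
        * V.transpose * X)) p q
      = Y p q - (1 / θ) * ∑ i, (if w i then (1:ℝ) else 0) * m i p q := by
    intro w p q
    rw [Matrix.sub_apply, Matrix.smul_apply,
      entry_lemma (fun i : Fin k => if w i then (1:ℝ) else 0)]
    simp [hm, smul_eq_mul]
  have main : ∀ p q, ∑ w : Fin k → Bool, (∏ i, if w i then θ else 1 - θ) *
      ((Y - (1 / θ) • (U * Matrix.diagonal
          (fun is : Fin k × Fin r => if w is.1 then (1 : ℝ) else 0)
        * V.transpose * X)) p q) ^ 2
      = ((Y - U * V.transpose * X) p q) ^ 2 + ((1 - θ) / θ) * ∑ i, (m i p q) ^ 2 := by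
    intro p q
    rw [hdet p q]
    rw [← key θ hθ k (Y p q) (fun i => m i p q)]
    exact Finset.sum_congr rfl fun w _ => by rw [hsto w p q]
  calc ∑ w : Fin k → Bool, (∏ i, if w i then θ else 1 - θ) *
      (∑ p, ∑ q, ((Y - (1 / θ) • (U * Matrix.diagonal
          (fun is : Fin k × Fin r => if w is.1 then (1 : ℝ) else 0)
        * V.transpose * X)) p q) ^ 2)
      = ∑ p, ∑ q, ∑ w : Fin k → Bool, (∏ i, if w i then θ else 1 - θ) *
          ((Y - (1 / θ) • (U * Matrix.diagonal
            (fun is : Fin k × Fin r => if w is.1 then (1 : ℝ) else 0)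
          * V.transpose * X)) p q) ^ 2 := by
        simp only [Finset.mul_sum]
        rw [Finset.sum_comm]
        exact Finset.sum_congr rfl fun p _ => Finset.sum_comm
    _ = ∑ p, ∑ q, (((Y - U * V.transpose * X) p q) ^ 2
          + ((1 - θ) / θ) * ∑ i, (m i p q) ^ 2) := by
        exact Finset.sum_congr rfl fun p _ => Finset.sum_congr rfl fun q _ => main p q
    _ = (∑ p, ∑ q, ((Y - U * V.transpose * X) p q) ^ 2)
      + ((1 - θ) / θ) * ∑ i : Fin k, ∑ p, ∑ q, (m i p q) ^ 2 := by
        simp only [Finset.sum_add_distrib, Finset.mul_sum]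
        congr 1
        exact (Finset.sum_congr rfl fun p _ => Finset.sum_comm).trans Finset.sum_comm
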